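/- Let G and H be finite loopless undirected graphs and let f : V(G) → V(H) be a map such that (i) whenever f(x)f(y) is an edge of H, xy is an edge of G, and (ii) the preimage of each vertex of H is a clique in G (any two distinct vertices of G with the same image under f are adjacent in G). Then ϑ(G) ≤ ϑ(H), ϑ'(G) ≤ ϑ'(H), and ϑ⁺(G) ≤ ϑ⁺(H). -/

import Mathlib

open scoped Pointwise
open MeasureTheory Bornology Filter
open Matrix

/-- The Lovász theta variant `ϑ⁺` of a finite graph: the maximum of the sum of entries of a
real symmetric positive semidefinite matrix of trace 1 whose entries are nonpositive on edges. -/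
noncomputable def thetaPlus {V : Type} [Fintype V] (G : SimpleGraph V) : ℝ :=
  sSup {t : ℝ | ∃ M : Matrix V V ℝ, M.PosSemidef ∧ M.trace = 1 ∧
    (∀ i j, G.Adj i j → M i j ≤ 0) ∧ t = ∑ i, ∑ j, M i j}

/-- The Lovász theta function `ϑ` of a finite graph. -/
noncomputable def theta {V : Type} [Fintype V] (G : SimpleGraph V) : ℝ :=
  sSup {t : ℝ | ∃ M : Matrix V V ℝ, M.PosSemidef ∧ M.trace = 1 ∧
    (∀ i j, G.Adj i j → M i j = 0) ∧ t = ∑ i, ∑ j, M i j}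

/-- The Lovász theta variant `ϑ'` of a finite graph. -/
noncomputable def thetaPrime {V : Type} [Fintype V] (G : SimpleGraph V) : ℝ :=
  sSup {t : ℝ | ∃ M : Matrix V V ℝ, M.PosSemidef ∧ M.trace = 1 ∧
    (∀ i j, G.Adj i j → M i j = 0) ∧ (∀ i j, 0 ≤ M i j) ∧ t = ∑ i, ∑ j, M i j}

section ThetaAux

open Matrix

variable {V W : Type} [Fintype V] [Fintype W]

private lemma theta_entry_le [DecidableEq V] {M : Matrix V V ℝ}
    (hM : M.PosSemidef) (i j : V) : 2 * M i j ≤ M i i + M j j := by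
  have h := hM.dotProduct_mulVec_nonneg (Pi.single i 1 - Pi.single j 1)
  have hsym : M j i = M i j := by
    have := hM.1.apply i j
    simpa using this
  by_cases hij : i = j
  · subst hij; linarith
  · simp [dotProduct, Matrix.mulVec, Pi.single_apply, sub_mul, mul_sub,
      Finset.sum_sub_distrib, Finset.sum_ite_eq', hij] at h
    linarith

private lemma theta_sum_le_card_mul_trace {M : Matrix V V ℝ}
    (hM : M.PosSemidef) : ∑ i, ∑ j, M i j ≤ (Fintype.card V) * M.trace := by
  classical
  have h : ∀ i j : V, M i j ≤ (M i i + M j j) / 2 := fun i j => by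
    have := theta_entry_le hM i j; linarith
  calc ∑ i, ∑ j, M i j ≤ ∑ i, ∑ j : V, (M i i + M j j) / 2 := by
        apply Finset.sum_le_sum; intro i _; exact Finset.sum_le_sum fun j _ => h i j
    _ = (Fintype.card V) * M.trace := by
        have h1 : ∑ i, ∑ j : V, (M i i + M j j) / 2
            = (∑ i, ∑ _j : V, M i i) / 2 + (∑ _i : V, ∑ j, M j j) / 2 := by
          rw [Finset.sum_div, Finset.sum_div, ← Finset.sum_add_distrib]
          apply Finset.sum_congr rfl; intro i _
          rw [Finset.sum_div, Finset.sum_div, ← Finset.sum_add_distrib]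
          apply Finset.sum_congr rfl; intro j _
          ring
        rw [h1]
        simp [Finset.sum_const, Finset.card_univ, Matrix.trace, Matrix.diag, Finset.mul_sum,
          Finset.sum_mul]

private lemma theta_sum_nonneg {M : Matrix V V ℝ} (hM : M.PosSemidef) :
    0 ≤ ∑ i, ∑ j, M i j := by
  have h := hM.dotProduct_mulVec_nonneg (fun _ => 1)
  simpa [dotProduct, Matrix.mulVec] using h

private lemma theta_smul_psd {M : Matrix V V ℝ} (hM : M.PosSemidef) {c : ℝ} (hc : 0 ≤ c) :
    (c • M).PosSemidef := by
  constructor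
  · show (c • M)ᴴ = c • M
    rw [Matrix.conjTranspose_smul, hM.1.eq]
    simp
  · intro x
    have := hM.2 x
    exact (hM.smul hc).2 x

variable (f : V → W) (M : Matrix V V ℝ) [DecidableEq W]

private noncomputable def thetaAmat : Matrix V W ℝ := fun x u => if f x = u then 1 else 0

private lemma thetaN_entry (u v : W) : ((thetaAmat f)ᴴ * M * thetaAmat f) u v
    = ∑ x, ∑ y, if f x = u ∧ f y = v then M x y else 0 := by
  rw [show (∑ x, ∑ y, if f x = u ∧ f y = v then M x y else 0)
      = ∑ y, ∑ x, (if f x = u ∧ f y = v then M x y else 0) from Finset.sum_comm]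
  simp only [Matrix.mul_apply, Matrix.conjTranspose_apply, thetaAmat]
  apply Finset.sum_congr rfl; intro y _
  by_cases h2 : f y = v
  · simp only [h2, if_true, and_true, mul_one]
    apply Finset.sum_congr rfl; intro x _
    by_cases h1 : f x = u <;> simp [h1]
  · simp [h2]

private lemma thetaN_trace : ((thetaAmat f)ᴴ * M * thetaAmat f).trace
    = ∑ x, ∑ y, if f x = f y then M x y else 0 := by
  rw [Matrix.trace]
  simp only [Matrix.diag, thetaN_entry]
  rw [Finset.sum_comm]
  apply Finset.sum_congr rfl; intro x _
  rw [Finset.sum_comm]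
  apply Finset.sum_congr rfl; intro y _
  simp only [ite_and]
  by_cases h1 : f x = f y
  · simp [← h1]
  · rw [Finset.sum_ite_eq]
    simp [h1, eq_comm]

private lemma thetaN_sum : ∑ u, ∑ v, ((thetaAmat f)ᴴ * M * thetaAmat f) u v
    = ∑ x, ∑ y, M x y := by
  simp only [thetaN_entry]
  have h1 : ∀ u : W, ∑ v : W, ∑ x, ∑ y, (if f x = u ∧ f y = v then M x y else 0)
      = ∑ x, ∑ y, (if f x = u then M x y else 0) := by
    intro u
    rw [Finset.sum_comm]
    apply Finset.sum_congr rfl; intro x _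
    rw [Finset.sum_comm]
    apply Finset.sum_congr rfl; intro y _
    simp [ite_and]
  simp only [h1]
  rw [Finset.sum_comm]
  apply Finset.sum_congr rfl; intro x _
  rw [Finset.sum_comm]
  simp

end ThetaAux

/-- Functoriality of the theta functions: if `f : V(G) → V(H)` pulls
edges back to edges and has clique preimages of vertices, then
`ϑ(G) ≤ ϑ(H)`, `ϑ'(G) ≤ ϑ'(H)`, and `ϑ⁺(G) ≤ ϑ⁺(H)`. -/
theorem theta_functorial {V W : Type} [Fintype V] [Fintype W]
    (G : SimpleGraph V) (H : SimpleGraph W) (f : V → W)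
    (hedge : ∀ x y, H.Adj (f x) (f y) → G.Adj x y)
    (hclique : ∀ x y, x ≠ y → f x = f y → G.Adj x y) :
    theta G ≤ theta H ∧ thetaPrime G ≤ thetaPrime H ∧ thetaPlus G ≤ thetaPlus H := by
  classical
  -- boundedness of the three sets for `H`
  have hb1 : BddAbove {t : ℝ | ∃ M : Matrix W W ℝ, M.PosSemidef ∧ M.trace = 1 ∧
      (∀ i j, H.Adj i j → M i j = 0) ∧ t = ∑ i, ∑ j, M i j} := by
    refine ⟨(Fintype.card W : ℝ), ?_⟩
    rintro t ⟨M, hPSD, htr, -, rfl⟩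
    calc ∑ i, ∑ j, M i j ≤ (Fintype.card W) * M.trace := theta_sum_le_card_mul_trace hPSD
      _ = (Fintype.card W : ℝ) := by rw [htr, mul_one]
  have hb2 : BddAbove {t : ℝ | ∃ M : Matrix W W ℝ, M.PosSemidef ∧ M.trace = 1 ∧
      (∀ i j, H.Adj i j → M i j = 0) ∧ (∀ i j, 0 ≤ M i j) ∧ t = ∑ i, ∑ j, M i j} := by
    refine ⟨(Fintype.card W : ℝ), ?_⟩
    rintro t ⟨M, hPSD, htr, -, -, rfl⟩
    calc ∑ i, ∑ j, M i j ≤ (Fintype.card W) * M.trace := theta_sum_le_card_mul_trace hPSD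
      _ = (Fintype.card W : ℝ) := by rw [htr, mul_one]
  have hb3 : BddAbove {t : ℝ | ∃ M : Matrix W W ℝ, M.PosSemidef ∧ M.trace = 1 ∧
      (∀ i j, H.Adj i j → M i j ≤ 0) ∧ t = ∑ i, ∑ j, M i j} := by
    refine ⟨(Fintype.card W : ℝ), ?_⟩
    rintro t ⟨M, hPSD, htr, -, rfl⟩
    calc ∑ i, ∑ j, M i j ≤ (Fintype.card W) * M.trace := theta_sum_le_card_mul_trace hPSD
      _ = (Fintype.card W : ℝ) := by rw [htr, mul_one]
  -- nonnegativity of the three suprema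
  have hnn1 : 0 ≤ sSup {t : ℝ | ∃ M : Matrix W W ℝ, M.PosSemidef ∧ M.trace = 1 ∧
      (∀ i j, H.Adj i j → M i j = 0) ∧ t = ∑ i, ∑ j, M i j} := by
    by_cases h : {t : ℝ | ∃ M : Matrix W W ℝ, M.PosSemidef ∧ M.trace = 1 ∧
        (∀ i j, H.Adj i j → M i j = 0) ∧ t = ∑ i, ∑ j, M i j}.Nonempty
    · obtain ⟨t, ht⟩ := h
      obtain ⟨M, hPSD, -, -, rfl⟩ := id ht
      exact le_trans (theta_sum_nonneg hPSD) (le_csSup hb1 ht)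
    · rw [Set.not_nonempty_iff_eq_empty] at h
      rw [h, Real.sSup_empty]
  have hnn2 : 0 ≤ sSup {t : ℝ | ∃ M : Matrix W W ℝ, M.PosSemidef ∧ M.trace = 1 ∧
      (∀ i j, H.Adj i j → M i j = 0) ∧ (∀ i j, 0 ≤ M i j) ∧ t = ∑ i, ∑ j, M i j} := by
    by_cases h : {t : ℝ | ∃ M : Matrix W W ℝ, M.PosSemidef ∧ M.trace = 1 ∧
        (∀ i j, H.Adj i j → M i j = 0) ∧ (∀ i j, 0 ≤ M i j) ∧ t = ∑ i, ∑ j, M i j}.Nonempty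
    · obtain ⟨t, ht⟩ := h
      obtain ⟨M, hPSD, -, -, -, rfl⟩ := id ht
      exact le_trans (theta_sum_nonneg hPSD) (le_csSup hb2 ht)
    · rw [Set.not_nonempty_iff_eq_empty] at h
      rw [h, Real.sSup_empty]
  have hnn3 : 0 ≤ sSup {t : ℝ | ∃ M : Matrix W W ℝ, M.PosSemidef ∧ M.trace = 1 ∧
      (∀ i j, H.Adj i j → M i j ≤ 0) ∧ t = ∑ i, ∑ j, M i j} := by
    by_cases h : {t : ℝ | ∃ M : Matrix W W ℝ, M.PosSemidef ∧ M.trace = 1 ∧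
        (∀ i j, H.Adj i j → M i j ≤ 0) ∧ t = ∑ i, ∑ j, M i j}.Nonempty
    · obtain ⟨t, ht⟩ := h
      obtain ⟨M, hPSD, -, -, rfl⟩ := id ht
      exact le_trans (theta_sum_nonneg hPSD) (le_csSup hb3 ht)
    · rw [Set.not_nonempty_iff_eq_empty] at h
      rw [h, Real.sSup_empty]
  refine ⟨?_, ?_, ?_⟩
  · -- theta
    rw [theta, theta]
    apply Real.sSup_le _ hnn1
    rintro t ⟨M, hPSD, htr, hE, rfl⟩
    set N := (thetaAmat f)ᴴ * M * thetaAmat f with hNdef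
    have hNPSD : N.PosSemidef := hPSD.conjTranspose_mul_mul_same (thetaAmat f)
    have htrN : N.trace = 1 := by
      rw [hNdef, thetaN_trace]
      have hx : ∀ x : V, ∑ y, (if f x = f y then M x y else 0) = M x x := by
        intro x
        rw [Finset.sum_eq_single x]
        · simp
        · intro y _ hyx
          by_cases h : f x = f y
          · simp [h, hE x y (hclique x y (fun hh => hyx hh.symm) h)]
          · simp [h]
        · simp
      rw [Finset.sum_congr rfl fun x _ => hx x]
      simpa [Matrix.trace, Matrix.diag] using htr
    have hEN : ∀ u v, H.Adj u v → N u v = 0 := by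
      intro u v huv
      rw [hNdef, thetaN_entry]
      apply Finset.sum_eq_zero; intro x _
      apply Finset.sum_eq_zero; intro y _
      split_ifs with h
      · exact hE x y (hedge x y (by rw [h.1, h.2]; exact huv))
      · rfl
    have hsN : ∑ u, ∑ v, N u v = ∑ x, ∑ y, M x y := thetaN_sum f M
    exact le_csSup hb1 ⟨N, hNPSD, htrN, hEN, hsN.symm⟩
  · -- thetaPrime
    rw [thetaPrime, thetaPrime]
    apply Real.sSup_le _ hnn2
    rintro t ⟨M, hPSD, htr, hE, hNNeg, rfl⟩
    set N := (thetaAmat f)ᴴ * M * thetaAmat f with hNdef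
    have hNPSD : N.PosSemidef := hPSD.conjTranspose_mul_mul_same (thetaAmat f)
    have htrN : N.trace = 1 := by
      rw [hNdef, thetaN_trace]
      have hx : ∀ x : V, ∑ y, (if f x = f y then M x y else 0) = M x x := by
        intro x
        rw [Finset.sum_eq_single x]
        · simp
        · intro y _ hyx
          by_cases h : f x = f y
          · simp [h, hE x y (hclique x y (fun hh => hyx hh.symm) h)]
          · simp [h]
        · simp
      rw [Finset.sum_congr rfl fun x _ => hx x]
      simpa [Matrix.trace, Matrix.diag] using htr
    have hEN : ∀ u v, H.Adj u v → N u v = 0 := by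
      intro u v huv
      rw [hNdef, thetaN_entry]
      apply Finset.sum_eq_zero; intro x _
      apply Finset.sum_eq_zero; intro y _
      split_ifs with h
      · exact hE x y (hedge x y (by rw [h.1, h.2]; exact huv))
      · rfl
    have hNN : ∀ u v, 0 ≤ N u v := by
      intro u v
      rw [hNdef, thetaN_entry]
      apply Finset.sum_nonneg; intro x _
      apply Finset.sum_nonneg; intro y _
      split_ifs with h
      · exact hNNeg x y
      · exact le_refl 0
    have hsN : ∑ u, ∑ v, N u v = ∑ x, ∑ y, M x y := thetaN_sum f M
    exact le_csSup hb2 ⟨N, hNPSD, htrN, hEN, hNN, hsN.symm⟩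
  · -- thetaPlus
    rw [thetaPlus, thetaPlus]
    apply Real.sSup_le _ hnn3
    rintro t ⟨M, hPSD, htr, hE, rfl⟩
    by_cases ht : ∑ i, ∑ j, M i j ≤ 1
    · -- use a diagonal witness
      have hV : Nonempty V := by
        by_contra h
        rw [not_nonempty_iff] at h
        rw [Matrix.trace] at htr
        simp [Finset.univ_eq_empty] at htr
      obtain ⟨x0⟩ := hV
      refine le_trans ht (le_csSup hb3 ⟨Matrix.diagonal (Pi.single (f x0) 1), ?_, ?_, ?_, ?_⟩)
      · exact Matrix.posSemidef_diagonal_iff.mpr fun i => by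
          by_cases h : i = f x0 <;> simp [Pi.single_apply, h]
      · rw [Matrix.trace_diagonal]
        simp
      · intro i j hij
        rw [Matrix.diagonal_apply_ne _ hij.ne]
      · simp [Matrix.diagonal_apply, Finset.sum_ite_eq']
    · push_neg at ht
      set N := (thetaAmat f)ᴴ * M * thetaAmat f with hNdef
      have hNPSD : N.PosSemidef := hPSD.conjTranspose_mul_mul_same (thetaAmat f)
      have htrN : N.trace ≤ 1 := by
        rw [hNdef, thetaN_trace]
        have hx : ∀ x : V, ∑ y, (if f x = f y then M x y else 0) ≤ M x x := by
          intro x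
          have hle : ∀ y ∈ Finset.univ, (if f x = f y then M x y else 0)
              ≤ (if y = x then M x x else 0) := by
            intro y _
            by_cases hyx : y = x
            · simp [hyx]
            · by_cases h : f x = f y
              · simp only [hyx, if_neg, h, if_true, if_false]
                exact hE x y (hclique x y (fun hh => hyx hh.symm) h)
              · simp [hyx, h]
          calc ∑ y, (if f x = f y then M x y else 0)
              ≤ ∑ y, (if y = x then M x x else 0) := Finset.sum_le_sum hle
            _ = M x x := by simp
        calc ∑ x, ∑ y, (if f x = f y then M x y else 0) ≤ ∑ x, M x x :=
              Finset.sum_le_sum fun x _ => hx x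
          _ = 1 := by simpa [Matrix.trace, Matrix.diag] using htr
      have hEN : ∀ u v, H.Adj u v → N u v ≤ 0 := by
        intro u v huv
        rw [hNdef, thetaN_entry]
        apply Finset.sum_nonpos; intro x _
        apply Finset.sum_nonpos; intro y _
        split_ifs with h
        · exact hE x y (hedge x y (by rw [h.1, h.2]; exact huv))
        · exact le_refl 0
      have hsN : ∑ u, ∑ v, N u v = ∑ x, ∑ y, M x y := thetaN_sum f M
      have hbound : ∑ x, ∑ y, M x y ≤ (Fintype.card W) * N.trace := by
        rw [← hsN]; exact theta_sum_le_card_mul_trace hNPSD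
      have hc : 0 < N.trace := by
        by_contra h
        push_neg at h
        have h2 : (Fintype.card W : ℝ) * N.trace ≤ 0 :=
          mul_nonpos_of_nonneg_of_nonpos (Nat.cast_nonneg _) h
        linarith
      set c := N.trace with hcdef
      have hcinv : (1 : ℝ) ≤ c⁻¹ := by
        rw [le_inv_comm₀]
        · simpa using htrN
        · norm_num
        · exact hc
      have hmem : (∑ i, ∑ j, (c⁻¹ • N) i j) ∈ {t : ℝ | ∃ M : Matrix W W ℝ, M.PosSemidef ∧
          M.trace = 1 ∧ (∀ i j, H.Adj i j → M i j ≤ 0) ∧ t = ∑ i, ∑ j, M i j} := by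
        refine ⟨c⁻¹ • N, theta_smul_psd hNPSD (inv_nonneg.mpr hc.le), ?_, ?_, rfl⟩
        · rw [Matrix.trace_smul, ← hcdef]
          simp [smul_eq_mul, inv_mul_cancel₀ hc.ne']
        · intro i j hij
          have := hEN i j hij
          simp only [Matrix.smul_apply, smul_eq_mul]
          exact mul_nonpos_of_nonneg_of_nonpos (inv_nonneg.mpr hc.le) this
      refine le_trans ?_ (le_csSup hb3 hmem)
      have hrw : ∑ i, ∑ j, (c⁻¹ • N) i j = c⁻¹ * ∑ i, ∑ j, N i j := by
        simp [Matrix.smul_apply, smul_eq_mul, Finset.mul_sum]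
      rw [hrw, hsN]
      have hT : (0:ℝ) ≤ ∑ i, ∑ j, M i j := le_of_lt (lt_trans zero_lt_one ht)
      exact le_mul_of_one_le_left hT hcinv
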